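/- Let d ≥ 1, h ∈ ℝ, let H : ℝ^d → ℝ be continuously differentiable, and let B : ℝ^d → Matrix d d ℝ be such that B(y) is skew-symmetric for every y. Suppose y₀, y₁ ∈ ℝ^d satisfy y₁ = y₀ + h · B((y₀ + y₁)/2) · ∫₀¹ ∇H(y₀ + σ(y₁ − y₀)) dσ. Then H(y₁) = H(y₀). -/

import Mathlib

open Matrix

/-- **Energy preservation of the Cohen–Hairer scheme (Example 1, `r = 1`).**
If `y₁ = y₀ + h B((y₀+y₁)/2) ∫₀¹ ∇H(y₀ + σ(y₁ − y₀)) dσ` with `B(y)` skew-symmetric,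
then `H(y₁) = H(y₀)`. -/
theorem cohen_hairer_energy_preservation
    (d : ℕ) (hd : 1 ≤ d) (h : ℝ)
    (H : EuclideanSpace ℝ (Fin d) → ℝ) (hH : ContDiff ℝ 1 H)
    (B : EuclideanSpace ℝ (Fin d) → Matrix (Fin d) (Fin d) ℝ)
    (hB : ∀ y, (B y)ᵀ = -(B y))
    (y₀ y₁ : EuclideanSpace ℝ (Fin d))
    (hy : y₁ = y₀ + h • (WithLp.equiv 2 (Fin d → ℝ)).symm
      ((B ((2:ℝ)⁻¹ • (y₀ + y₁))).mulVec
        (fun j => (∫ σ in (0:ℝ)..1, gradient H (y₀ + σ • (y₁ - y₀))) j))) :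
    H y₁ = H y₀ := by
  set w := y₁ - y₀ with hw
  set c : ℝ → EuclideanSpace ℝ (Fin d) := fun σ => y₀ + σ • w with hc
  have hdiff : Differentiable ℝ H := hH.differentiable one_ne_zero
  have hgc : Continuous (fun x => gradient H x) := by
    simp only [gradient]
    exact (InnerProductSpace.toDual ℝ _).symm.continuous.comp (hH.continuous_fderiv one_ne_zero)
  have hcc : Continuous c := continuous_const.add (continuous_id.smul continuous_const)
  have hInt : IntervalIntegrable (fun σ => gradient H (c σ)) MeasureTheory.volume 0 1 :=
    (hgc.comp hcc).intervalIntegrable 0 1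
  set v : EuclideanSpace ℝ (Fin d) := ∫ σ in (0:ℝ)..1, gradient H (c σ) with hv
  set M : Matrix (Fin d) (Fin d) ℝ := B ((2:ℝ)⁻¹ • (y₀ + y₁)) with hM
  -- derivative of H ∘ c
  have hderiv : ∀ σ : ℝ, HasDerivAt (fun t => H (c t))
      (inner ℝ (gradient H (c σ)) w : ℝ) σ := by
    intro σ
    have h1 : HasDerivAt c w σ := by
      have : HasDerivAt (fun t : ℝ => t • w) ((1:ℝ) • w) σ :=
        (hasDerivAt_id σ).smul_const w
      simpa [hc] using this.const_add y₀
    have h2 := (hdiff (c σ)).hasGradientAt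
    have h3 := (h2.hasFDerivAt).comp_hasDerivAt σ h1
    rw [InnerProductSpace.toDual_apply_apply] at h3
    exact h3
  have hcont : Continuous (fun σ => (inner ℝ (gradient H (c σ)) w : ℝ)) :=
    continuous_inner.comp ((hgc.comp hcc).prodMk continuous_const)
  have hftc : (∫ σ in (0:ℝ)..1, (inner ℝ (gradient H (c σ)) w : ℝ)) = H (c 1) - H (c 0) :=
    intervalIntegral.integral_eq_sub_of_hasDerivAt (f := fun t => H (c t))
      (fun t _ => hderiv t) (hcont.intervalIntegrable 0 1)
  have hpull : (∫ σ in (0:ℝ)..1, (inner ℝ (gradient H (c σ)) w : ℝ)) = (inner ℝ w v : ℝ) := by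
    have h1 : ∀ x : EuclideanSpace ℝ (Fin d), (inner ℝ x w : ℝ) = innerSL ℝ w x := by
      intro x; rw [innerSL_apply_apply, real_inner_comm]
    calc ∫ σ in (0:ℝ)..1, (inner ℝ (gradient H (c σ)) w : ℝ)
        = ∫ σ in (0:ℝ)..1, innerSL ℝ w (gradient H (c σ)) := by simp_rw [h1]
      _ = innerSL ℝ w v := (innerSL ℝ w).intervalIntegral_comp_comm hInt
      _ = (inner ℝ w v : ℝ) := innerSL_apply_apply _ _ _
  have hwv : w = h • ((WithLp.equiv 2 (Fin d → ℝ)).symm (M.mulVec (fun j => v j))) := by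
    rw [hw, hy, add_sub_cancel_left]
  have hdot : (M.mulVec (fun j => v j)) ⬝ᵥ (fun j => v j) = 0 := by
    set u : Fin d → ℝ := fun j => v j with hu
    have h1 : M.mulVec u ⬝ᵥ u = u ⬝ᵥ M.mulVec u := dotProduct_comm _ _
    have h2 : u ⬝ᵥ M.mulVec u = (Mᵀ.mulVec u) ⬝ᵥ u := by
      rw [Matrix.dotProduct_mulVec, Matrix.mulVec_transpose]
    rw [hM] at h2; rw [hB, Matrix.neg_mulVec, neg_dotProduct, ← hM] at h2
    linarith [h1, h2]
  have hzero : (inner ℝ w v : ℝ) = 0 := by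
    calc (inner ℝ w v : ℝ) = ∑ i, w i * v i := by
          simp [PiLp.inner_apply, RCLike.inner_apply, conj_trivial, mul_comm]
      _ = h * ((M.mulVec (fun j => v j)) ⬝ᵥ (fun j => v j)) := by
          rw [hwv]
          simp only [PiLp.smul_apply, WithLp.equiv_symm_apply, WithLp.ofLp_toLp, smul_eq_mul, dotProduct,
            Finset.mul_sum, mul_assoc]
      _ = 0 := by rw [hdot]; ring
  have hfin : H (c 1) - H (c 0) = 0 := by rw [← hftc, hpull, hzero]
  have h0 : c 0 = y₀ := by simp [hc]
  have h1 : c 1 = y₁ := by simp [hc, hw]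
  rw [h0, h1] at hfin; linarith
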